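/- Let (G,κ) be a capacitated graph with κ(x) ≤ d_G(x) for all x, and let X = {x : κ(x) = d_G(x)}. If a vertex u satisfies |N_G(u) ∩ X| ≤ κ(u), then there exists a DP-Nash subgraph (D, P; E) of (G,κ) with u ∈ D and N_G(u) ∩ X ⊆ P. -/

import Mathlib

open Finset
open scoped Classical

noncomputable section

variable {V : Type*} [Fintype V]

/-- Degree of a vertex in a (simple) graph on a finite vertex set. -/
def deg (H : SimpleGraph V) (x : V) : ℕ :=
  (Finset.univ.filter fun y => H.Adj x y).card

/-- `(D, P; H)` is a DP-Nash subgraph of the capacitated graph `(G, κ)`: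
`H` is a spanning subgraph of `G`, bipartite with partite sets `D` and `P`,
no vertex of `P` is isolated in `H`, and every `x ∈ D` has
`H`-degree `min (d_G x) (κ x)`. -/
def IsDPNash (G : SimpleGraph V) (κ : V → ℕ) (D P : Finset V) (H : SimpleGraph V) : Prop :=
  H ≤ G ∧ D ∪ P = Finset.univ ∧ Disjoint D P ∧
    (∀ ⦃u v⦄, H.Adj u v → (u ∈ D ∧ v ∈ P) ∨ (u ∈ P ∧ v ∈ D)) ∧
    (∀ v ∈ P, 0 < deg H v) ∧
    (∀ x ∈ D, deg H x = min (deg G x) (κ x))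

/-- `X = {x : κ(x) = d_G(x)}`. -/
def XX (G : SimpleGraph V) (κ : V → ℕ) : Finset V :=
  Finset.univ.filter fun x => κ x = deg G x

/-- `Y = N(X) \ X`. -/
def YY (G : SimpleGraph V) (κ : V → ℕ) : Finset V :=
  Finset.univ.filter fun y => y ∉ XX G κ ∧ ∃ x ∈ XX G κ, G.Adj x y

/-- `Z = V \ (X ∪ Y)`. -/
def ZZ (G : SimpleGraph V) (κ : V → ℕ) : Finset V :=
  Finset.univ \ (XX G κ ∪ YY G κ)

/-- `Y^{κ>0} = {y ∈ Y : κ(y) > 0}`. -/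
def Ypos (G : SimpleGraph V) (κ : V → ℕ) : Finset V :=
  (YY G κ).filter fun y => 0 < κ y

/-- The neighbours of `x` in `G` lying in `W`. -/
def nbrW (G : SimpleGraph V) (x : V) (W : Finset V) : Finset V :=
  Finset.univ.filter fun y => G.Adj x y ∧ y ∈ W

/-- `L(W) = {x ∈ X ∪ Z : |N_G(x) ∩ W| > d_G(x) - κ(x)}`. -/
def LL (G : SimpleGraph V) (κ : V → ℕ) (W : Finset V) : Finset V :=
  (XX G κ ∪ ZZ G κ).filter fun x => deg G x - κ x < (nbrW G x W).card

/-! ### Auxiliary machinery -/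

lemma mem_nbrW {G : SimpleGraph V} {x y : V} {W : Finset V} :
    y ∈ nbrW G x W ↔ G.Adj x y ∧ y ∈ W := by
  simp [nbrW]

lemma nbrW_subset (G : SimpleGraph V) (x : V) (W : Finset V) : nbrW G x W ⊆ W := by
  intro y hy; exact (mem_nbrW.1 hy).2

lemma card_nbrW_univ (G : SimpleGraph V) (x : V) :
    (nbrW G x (univ : Finset V)).card = deg G x := by
  unfold nbrW deg
  congr 1
  ext y
  simp

/-- A partial solution on the "active" vertex set `R`, with "free" set `F ⊆ P`
whose vertices need not be covered.  `f v` is the set of `P`-partners of a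
`D`-vertex `v`. -/
structure Sol (G : SimpleGraph V) (κ : V → ℕ) (R F : Finset V) where
  D : Finset V
  P : Finset V
  f : V → Finset V
  hDP : D ∪ P = R
  hdisj : Disjoint D P
  hfP : ∀ v, f v ⊆ P
  hfN : ∀ v w, w ∈ f v → G.Adj v w
  hfD : ∀ v, v ∉ D → f v = ∅
  hcard : ∀ v ∈ D, (f v).card = κ v
  hcov : ∀ p ∈ P, p ∉ F → ∃ x ∈ D, p ∈ f x
  hFP : F ⊆ P

/-- The key step: given `u ∈ R` and a set `C` of `κ u` neighbours of `u` in `R`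
such that every `R`-neighbour of `u` outside `C ∪ F` has slack, a solution on
`R \ ({u} ∪ C)` (with capacities truncated to the new degrees) extends to a
solution on `R` with `u ∈ D` and `C ⊆ P`. -/
lemma step (G : SimpleGraph V) (κ : V → ℕ) (R F : Finset V) (u : V) (C : Finset V)
    (huR : u ∈ R) (huF : u ∉ F)
    (hκR : ∀ x ∈ R, κ x ≤ (nbrW G x R).card)
    (hC : C ⊆ nbrW G u R) (hCcard : C.card = κ u)
    (hX : ∀ v ∈ R, v ∉ insert u C → v ∉ F → G.Adj u v → κ v < (nbrW G v R).card)
    (sub : Sol G (fun v => min (κ v) ((nbrW G v (R \ insert u C)).card))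
      (R \ insert u C) (F \ insert u C)) :
    ∃ s : Sol G κ R F, u ∈ s.D ∧ C ⊆ s.P := by
  set R'' : Finset V := R \ insert u C with hR''def
  have hCR : C ⊆ R := hC.trans (nbrW_subset G u R)
  have hins : insert u C ⊆ R := insert_subset huR hCR
  have huC : u ∉ C := by
    intro h
    exact (G.loopless.irrefl u) (mem_nbrW.1 (hC h)).1
  have hDsub : sub.D ⊆ R'' := fun x hx => by
    have h := sub.hDP; rw [← h]; exact mem_union_left _ hx
  have hPsub : sub.P ⊆ R'' := fun x hx => by
    have h := sub.hDP; rw [← h]; exact mem_union_right _ hx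
  have huR'' : u ∉ R'' := by simp [hR''def]
  have huD'' : u ∉ sub.D := fun h => huR'' (hDsub h)
  have huP'' : u ∉ sub.P := fun h => huR'' (hPsub h)
  -- degree splitting
  have hsplit : ∀ v, (nbrW G v R).card
      = (nbrW G v R'').card + (nbrW G v (insert u C)).card := by
    intro v
    have h1 : nbrW G v R = nbrW G v R'' ∪ nbrW G v (insert u C) := by
      ext y
      simp only [mem_nbrW, mem_union, hR''def, mem_sdiff]
      constructor
      · rintro ⟨hadj, hyR⟩
        by_cases hy : y ∈ insert u C
        · exact Or.inr ⟨hadj, hy⟩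
        · exact Or.inl ⟨hadj, hyR, hy⟩
      · rintro (⟨hadj, hyR, -⟩ | ⟨hadj, hy⟩)
        · exact ⟨hadj, hyR⟩
        · exact ⟨hadj, hins hy⟩
    rw [h1, card_union_of_disjoint]
    rw [Finset.disjoint_left]
    intro y hy1 hy2
    exact ((mem_sdiff.1 (mem_nbrW.1 hy1).2).2) (mem_nbrW.1 hy2).2
  -- the top-up bound
  have hDkey : ∀ v ∈ sub.D,
      κ v - min (κ v) ((nbrW G v R'').card) ≤ (nbrW G v C).card := by
    intro v hv
    have hvR'' : v ∈ R'' := hDsub hv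
    have hvR : v ∈ R := (mem_sdiff.1 hvR'').1
    have hvins : v ∉ insert u C := (mem_sdiff.1 hvR'').2
    have hvF : v ∉ F := by
      intro hvF
      have : v ∈ F \ insert u C := mem_sdiff.2 ⟨hvF, hvins⟩
      exact (Finset.disjoint_left.1 sub.hdisj hv) (sub.hFP this)
    rcases le_or_gt (κ v) ((nbrW G v R'').card) with h | h
    · simp [min_eq_left h]
    · rw [min_eq_right h.le]
      have hsub1 : nbrW G v (insert u C) ⊆ insert u (nbrW G v C) := by
        intro y hy
        rcases mem_nbrW.1 hy with ⟨hadj, hy'⟩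
        rcases mem_insert.1 hy' with rfl | hy''
        · exact mem_insert_self _ _
        · exact mem_insert_of_mem (mem_nbrW.2 ⟨hadj, hy''⟩)
      by_cases hvu : G.Adj u v
      · have hlt : κ v < (nbrW G v R).card := hX v hvR hvins hvF hvu
        have h2 : (nbrW G v (insert u C)).card ≤ (nbrW G v C).card + 1 :=
          le_trans (card_le_card hsub1) (card_insert_le _ _)
        have := hsplit v
        omega
      · have hsub2 : nbrW G v (insert u C) ⊆ nbrW G v C := by
          intro y hy
          rcases mem_nbrW.1 hy with ⟨hadj, hy'⟩
          rcases mem_insert.1 hy' with rfl | hy''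
          · exact absurd hadj.symm hvu
          · exact mem_nbrW.2 ⟨hadj, hy''⟩
        have hle : κ v ≤ (nbrW G v R).card := hκR v hvR
        have h2 : (nbrW G v (insert u C)).card ≤ (nbrW G v C).card :=
          card_le_card hsub2
        have := hsplit v
        omega
  -- choose top-up sets
  have hT : ∀ v, ∃ T : Finset V, T ⊆ nbrW G v C ∧
      (v ∈ sub.D → T.card = κ v - min (κ v) ((nbrW G v R'').card)) ∧
      (v ∉ sub.D → T = ∅) := by
    intro v
    by_cases hv : v ∈ sub.D
    · obtain ⟨T, hT1, hT2⟩ := Finset.exists_subset_card_eq (hDkey v hv)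
      exact ⟨T, hT1, fun _ => hT2, fun h => absurd hv h⟩
    · exact ⟨∅, empty_subset _, fun h => absurd h hv, fun _ => rfl⟩
  choose T hT1 hT2 hT3 using hT
  -- the new solution
  have hfu : (fun v => if v = u then C else sub.f v ∪ T v) u = C := if_pos rfl
  have hfne : ∀ v, v ≠ u →
      (fun v => if v = u then C else sub.f v ∪ T v) v = sub.f v ∪ T v :=
    fun v hv => if_neg hv
  beta_reduce at hfu hfne
  refine ⟨⟨insert u sub.D, sub.P ∪ C, (fun v => if v = u then C else sub.f v ∪ T v),
    ?_, ?_, ?_, ?_, ?_, ?_, ?_, ?_⟩, ?_, ?_⟩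
  · -- hDP
    ext x
    simp only [mem_union, mem_insert]
    constructor
    · rintro ((rfl | hx) | hx | hx)
      · exact huR
      · exact (mem_sdiff.1 (hDsub hx)).1
      · exact (mem_sdiff.1 (hPsub hx)).1
      · exact hCR hx
    · intro hxR
      by_cases hx : x ∈ insert u C
      · rcases mem_insert.1 hx with rfl | hx'
        · exact Or.inl (Or.inl rfl)
        · exact Or.inr (Or.inr hx')
      · have : x ∈ R'' := mem_sdiff.2 ⟨hxR, hx⟩
        rw [← sub.hDP] at this
        rcases mem_union.1 this with h | h
        · exact Or.inl (Or.inr h)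
        · exact Or.inr (Or.inl h)
  · -- hdisj
    rw [Finset.disjoint_left]
    intro x hx hx'
    rcases mem_insert.1 hx with rfl | hxD
    · rcases mem_union.1 hx' with h | h
      · exact huP'' h
      · exact huC h
    · rcases mem_union.1 hx' with h | h
      · exact (Finset.disjoint_left.1 sub.hdisj hxD) h
      · exact (mem_sdiff.1 (hDsub hxD)).2 (mem_insert_of_mem h)
  · -- hfP
    intro v w hw
    by_cases hv : v = u
    · subst hv; rw [hfu] at hw; exact mem_union_right _ hw
    · rw [hfne v hv] at hw
      rcases mem_union.1 hw with h | h
      · exact mem_union_left _ (sub.hfP v h)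
      · exact mem_union_right _ (nbrW_subset G v C (hT1 v h))
  · -- hfN
    intro v w hw
    by_cases hv : v = u
    · subst hv; rw [hfu] at hw; exact (mem_nbrW.1 (hC hw)).1
    · rw [hfne v hv] at hw
      rcases mem_union.1 hw with h | h
      · exact sub.hfN v w h
      · exact (mem_nbrW.1 (hT1 v h)).1
  · -- hfD
    intro v hv
    have hvu : v ≠ u := by rintro rfl; exact hv (mem_insert_self _ _)
    have hvD : v ∉ sub.D := fun h => hv (mem_insert_of_mem h)
    rw [hfne v hvu, sub.hfD v hvD, hT3 v hvD, empty_union]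
  · -- hcard
    intro v hv
    rcases mem_insert.1 hv with rfl | hvD
    · rw [hfu]; exact hCcard
    · have hvu : v ≠ u := by rintro rfl; exact huD'' hvD
      rw [hfne v hvu]
      have hdisjfT : Disjoint (sub.f v) (T v) := by
        rw [Finset.disjoint_left]
        intro y hy1 hy2
        exact (mem_sdiff.1 (hPsub (sub.hfP v hy1))).2
          (mem_insert_of_mem (nbrW_subset G v C (hT1 v hy2)))
      rw [card_union_of_disjoint hdisjfT, sub.hcard v hvD, hT2 v hvD]
      have : min (κ v) ((nbrW G v R'').card) ≤ κ v := min_le_left _ _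
      omega
  · -- hcov
    intro p hp hpF
    rcases mem_union.1 hp with hpP | hpC
    · have hpu : p ≠ u := by rintro rfl; exact huP'' hpP
      have hpF'' : p ∉ F \ insert u C := fun h => hpF (mem_sdiff.1 h).1
      obtain ⟨x, hxD, hpx⟩ := sub.hcov p hpP hpF''
      have hxu : x ≠ u := by rintro rfl; exact huD'' hxD
      exact ⟨x, mem_insert_of_mem hxD, by rw [hfne x hxu]; exact mem_union_left _ hpx⟩
    · exact ⟨u, mem_insert_self _ _, by rw [hfu]; exact hpC⟩
  · -- hFP
    intro q hq
    have hqu : q ≠ u := by rintro rfl; exact huF hq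
    by_cases hqC : q ∈ C
    · exact mem_union_right _ hqC
    · have : q ∈ F \ insert u C := by
        rw [mem_sdiff, mem_insert]
        exact ⟨hq, fun h => h.elim hqu hqC⟩
      exact mem_union_left _ (sub.hFP this)
  · exact mem_insert_self _ _
  · exact fun c hc => mem_union_right _ hc

/-- Existence of a partial solution, by induction on `|R \ F|`. -/
lemma lemA (G : SimpleGraph V) :
    ∀ (n : ℕ) (κ : V → ℕ) (R F : Finset V), F ⊆ R →
      (∀ x ∈ R, κ x ≤ (nbrW G x R).card) → (R \ F).card ≤ n →
      Nonempty (Sol G κ R F) := by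
  intro n
  induction n with
  | zero =>
    intro κ R F hFR hκR hcard
    have hRF : R \ F = ∅ := card_eq_zero.1 (Nat.le_zero.1 hcard)
    have hRF' : R ⊆ F := sdiff_eq_empty_iff_subset.1 hRF
    have hFR' : F = R := Subset.antisymm hFR hRF'
    exact ⟨⟨∅, R, fun _ => ∅, empty_union R, disjoint_empty_left R,
      fun _ => empty_subset _, fun v w h => absurd h (notMem_empty w),
      fun _ _ => rfl, fun v hv => absurd hv (notMem_empty v),
      fun p hp hpF => absurd (hFR' ▸ hp) hpF, hFR' ▸ subset_rfl⟩⟩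
  | succ n ih =>
    intro κ R F hFR hκR hcard
    by_cases hRF : R \ F = ∅
    · -- same as base case
      have hRF' : R ⊆ F := sdiff_eq_empty_iff_subset.1 hRF
      have hFR' : F = R := Subset.antisymm hFR hRF'
      exact ⟨⟨∅, R, fun _ => ∅, empty_union R, disjoint_empty_left R,
        fun _ => empty_subset _, fun v w h => absurd h (notMem_empty w),
        fun _ _ => rfl, fun v hv => absurd hv (notMem_empty v),
        fun p hp hpF => absurd (hFR' ▸ hp) hpF, hFR' ▸ subset_rfl⟩⟩
    · have main : ∀ (u : V) (C : Finset V), u ∈ R \ F → C ⊆ nbrW G u R →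
          C.card = κ u →
          (∀ v ∈ R, v ∉ insert u C → v ∉ F → G.Adj u v → κ v < (nbrW G v R).card) →
          Nonempty (Sol G κ R F) := by
        intro u C hu hC hCcard hX
        have huR : u ∈ R := (mem_sdiff.1 hu).1
        have huF : u ∉ F := (mem_sdiff.1 hu).2
        -- the subproblem
        have hsubcard : ((R \ insert u C) \ (F \ insert u C)).card ≤ n := by
          have hsubset : (R \ insert u C) \ (F \ insert u C) ⊆ (R \ F).erase u := by
            intro v hv
            rw [mem_sdiff, mem_sdiff, mem_sdiff] at hv
            rw [mem_erase, mem_sdiff, mem_insert] at *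
            obtain ⟨⟨hvR, hvins⟩, hv2⟩ := hv
            refine ⟨fun h => hvins (Or.inl h), hvR, fun hvF => hv2 ⟨hvF, hvins⟩⟩
          have h1 : ((R \ insert u C) \ (F \ insert u C)).card ≤ ((R \ F).erase u).card :=
            card_le_card hsubset
          rw [card_erase_of_mem hu] at h1
          have h2 : 0 < (R \ F).card := card_pos.2 (nonempty_iff_ne_empty.2 hRF)
          omega
        obtain ⟨sub⟩ := ih (fun v => min (κ v) ((nbrW G v (R \ insert u C)).card))
          (R \ insert u C) (F \ insert u C)
          (sdiff_subset_sdiff hFR subset_rfl)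
          (fun x _ => min_le_right _ _) hsubcard
        obtain ⟨s, -, -⟩ := step G κ R F u C huR huF hκR hC hCcard hX sub
        exact ⟨s⟩
      by_cases htight : ∃ w ∈ R \ F, κ w = (nbrW G w R).card
      · obtain ⟨u, hu, hw⟩ := htight
        refine main u (nbrW G u R) hu subset_rfl hw.symm ?_
        intro v hvR hvins hvF hadj
        exact absurd (mem_insert_of_mem (mem_nbrW.2 ⟨hadj, hvR⟩)) hvins
      · push_neg at htight
        obtain ⟨u, hu⟩ := nonempty_iff_ne_empty.2 hRF
        obtain ⟨C, hC, hCcard⟩ :=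
          Finset.exists_subset_card_eq (hκR u (mem_sdiff.1 hu).1)
        refine main u C hu hC hCcard ?_
        intro v hvR hvins hvF hadj
        exact lt_of_le_of_ne (hκR v hvR) (htight v (mem_sdiff.2 ⟨hvR, hvF⟩))

/-- If `|N_G(u) ∩ X| ≤ κ u` then there is a DP-Nash subgraph with `u` in the
`D`-set and `N_G(u) ∩ X` inside the `P`-set. -/
theorem stmt2 (G : SimpleGraph V) (κ : V → ℕ) (hκ : ∀ v, κ v ≤ deg G v)
    (u : V) (hu : (nbrW G u (XX G κ)).card ≤ κ u) :
    ∃ (D P : Finset V) (H : SimpleGraph V),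
      IsDPNash G κ D P H ∧ u ∈ D ∧ nbrW G u (XX G κ) ⊆ P := by
  -- choose `C` with `N(u) ∩ X ⊆ C ⊆ N(u)` and `|C| = κ u`
  have h1 : nbrW G u (XX G κ) ⊆ nbrW G u univ := by
    intro y hy
    exact mem_nbrW.2 ⟨(mem_nbrW.1 hy).1, mem_univ y⟩
  obtain ⟨C, hSC, hCsub, hCcard⟩ := Finset.exists_subsuperset_card_eq h1 hu
    (by rw [card_nbrW_univ]; exact hκ u)
  have hκR : ∀ x ∈ (univ : Finset V), κ x ≤ (nbrW G x univ).card := by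
    intro x _; rw [card_nbrW_univ]; exact hκ x
  have hX : ∀ v ∈ (univ : Finset V), v ∉ insert u C → v ∉ (∅ : Finset V) →
      G.Adj u v → κ v < (nbrW G v univ).card := by
    intro v _ hvins _ hadj
    rw [card_nbrW_univ]
    refine lt_of_le_of_ne (hκ v) (fun heq => ?_)
    have hvX : v ∈ XX G κ := mem_filter.2 ⟨mem_univ v, heq⟩
    have hvS : v ∈ nbrW G u (XX G κ) := mem_nbrW.2 ⟨hadj, hvX⟩
    exact hvins (mem_insert_of_mem (hSC hvS))
  obtain ⟨sub⟩ := lemA G (((univ \ insert u C) \ ((∅ : Finset V) \ insert u C)).card)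
    (fun v => min (κ v) ((nbrW G v (univ \ insert u C)).card))
    (univ \ insert u C) ((∅ : Finset V) \ insert u C)
    (by intro x hx; rw [mem_sdiff] at hx ⊢; exact ⟨mem_univ x, (hx).2⟩)
    (fun x _ => min_le_right _ _) le_rfl
  obtain ⟨s, hsD, hsP⟩ := step G κ univ ∅ u C (mem_univ u) (notMem_empty u)
    hκR hCsub hCcard hX sub
  -- build the graph `H`
  set H : SimpleGraph V := SimpleGraph.fromRel (fun a b => b ∈ s.f a) with hHdef
  have hH : ∀ a b, H.Adj a b ↔ a ≠ b ∧ (b ∈ s.f a ∨ a ∈ s.f b) := by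
    intro a b; rw [hHdef]; exact Iff.rfl
  refine ⟨s.D, s.P, H, ⟨?_, s.hDP, s.hdisj, ?_, ?_, ?_⟩, hsD, hSC.trans hsP⟩
  · -- H ≤ G
    intro a b hab
    rcases ((hH a b).1 hab).2 with h | h
    · exact s.hfN a b h
    · exact (s.hfN b a h).symm
  · -- bipartite
    intro a b hab
    rcases ((hH a b).1 hab).2 with h | h
    · refine Or.inl ⟨?_, s.hfP a h⟩
      by_contra haD
      rw [s.hfD a haD] at h
      exact notMem_empty b h
    · refine Or.inr ⟨s.hfP b h, ?_⟩
      by_contra hbD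
      rw [s.hfD b hbD] at h
      exact notMem_empty a h
  · -- covering
    intro v hvP
    obtain ⟨x, hxD, hvf⟩ := s.hcov v hvP (notMem_empty v)
    rw [deg, card_pos]
    exact ⟨x, by simp only [mem_filter, mem_univ, true_and]; exact (hH v x).2 ⟨(s.hfN x v hvf).ne', Or.inr hvf⟩⟩
  · -- degrees
    intro x hxD
    rw [min_eq_right (hκ x)]
    have hfx : univ.filter (fun y => H.Adj x y) = s.f x := by
      ext y
      rw [mem_filter, hH]
      constructor
      · rintro ⟨-, -, h | h⟩
        · exact h
        · exact absurd (s.hfP y h) (Finset.disjoint_left.1 s.hdisj hxD)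
      · intro hy
        exact ⟨mem_univ y, (s.hfN x y hy).ne, Or.inl hy⟩
    rw [deg]
    convert s.hcard x hxD using 2
    convert hfx
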